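/- Suppose 1 ≤ n < m − 3 with m ≥ 4. Then VR(F_n^m ∪ F_{n+1}^m ∪ F_{n+2}^m, 2) is homotopy equivalent to VR(F_n^m ∪ F_{n+2}^m, 2). -/

import Mathlib

open Finset

/-- An abstract simplicial complex on a vertex type `V`: a collection of nonempty
finite subsets of `V` (the faces), closed under taking nonempty subsets. -/
structure AbsSC (V : Type) where
  faces : Set (Finset V)
  not_empty_mem : ∅ ∉ faces
  down_closed : ∀ s ∈ faces, ∀ t : Finset V, t ⊆ s → t ≠ ∅ → t ∈ faces

namespace AbsSC

variable {V W : Type}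

/-- The vertex set of a simplicial complex. -/
def vertices (K : AbsSC V) : Set V := {v | ({v} : Finset V) ∈ K.faces}

/-- The geometric realization of a simplicial complex: the space of convex weightings
supported on a face, topologized as a subspace of `V → ℝ`. -/
def space (K : AbsSC V) : Type :=
  {f : V → ℝ // (∀ v, 0 ≤ f v) ∧ ∃ s ∈ K.faces, (∀ v, f v ≠ 0 → v ∈ s) ∧ ∑ v ∈ s, f v = 1}

instance (K : AbsSC V) : TopologicalSpace K.space := by unfold space; infer_instance

/-- `L` is a subcomplex of `K`. -/
def IsSubcomplex (L K : AbsSC V) : Prop := L.faces ⊆ K.faces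

/-- Homotopy equivalence of simplicial complexes (of their geometric realizations). -/
def HEquiv (K : AbsSC V) (L : AbsSC W) : Prop :=
  Nonempty (ContinuousMap.HomotopyEquiv K.space L.space)

/-- The realization of `K` is homotopy equivalent to the topological space `X`. -/
def HEquivTop (K : AbsSC V) (X : Type) [TopologicalSpace X] : Prop :=
  Nonempty (ContinuousMap.HomotopyEquiv K.space X)

/-- The inclusion of realizations induced by a subcomplex inclusion. -/
def incl {L K : AbsSC V} (h : L.faces ⊆ K.faces) : C(L.space, K.space) where
  toFun f := ⟨f.1, f.2.1, by obtain ⟨s, hs, h1, h2⟩ := f.2.2; exact ⟨s, h hs, h1, h2⟩⟩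
  continuous_toFun := Continuous.subtype_mk continuous_subtype_val _

variable [DecidableEq V]

/-- The link of a vertex. -/
def link (K : AbsSC V) (v : V) : AbsSC V where
  faces := {σ | σ ≠ ∅ ∧ v ∉ σ ∧ σ ∪ {v} ∈ K.faces}
  not_empty_mem h := h.1 rfl
  down_closed := by
    rintro s ⟨hne, hv, hs⟩ t hts htne
    exact ⟨htne, fun hvt => hv (hts hvt),
      K.down_closed _ hs _ (Finset.union_subset_union hts (Finset.Subset.refl _)) (by simp [Finset.union_eq_empty])⟩

lemma link_subset (K : AbsSC V) (v : V) : (K.link v).faces ⊆ K.faces := by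
  rintro σ ⟨hne, hv, hσ⟩
  exact K.down_closed _ hσ _ Finset.subset_union_left hne

/-- The complex induced on the vertices other than `v`. -/
def delete (K : AbsSC V) (v : V) : AbsSC V where
  faces := {σ | σ ∈ K.faces ∧ v ∉ σ}
  not_empty_mem h := K.not_empty_mem h.1
  down_closed := by
    rintro s ⟨hs, hv⟩ t hts htne
    exact ⟨K.down_closed _ hs _ hts htne, fun h => hv (hts h)⟩

/-- The star of a vertex: `st_K(v) = {σ : σ ∪ {v} ∈ K}`. -/
def star (K : AbsSC V) (v : V) : AbsSC V where
  faces := {σ | σ ≠ ∅ ∧ σ ∪ {v} ∈ K.faces}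
  not_empty_mem h := h.1 rfl
  down_closed := by
    rintro s ⟨hne, hs⟩ t hts htne
    exact ⟨htne,
      K.down_closed _ hs _ (Finset.union_subset_union hts (Finset.Subset.refl _)) (by simp [Finset.union_eq_empty])⟩

/-- The star cluster of a subcomplex `L` in `K`: the union of stars of vertices of `L`. -/
def starCluster (K L : AbsSC V) : AbsSC V where
  faces := {σ | σ ≠ ∅ ∧ ∃ v, ({v} : Finset V) ∈ L.faces ∧ σ ∪ {v} ∈ K.faces}
  not_empty_mem h := h.1 rfl
  down_closed := by
    rintro s ⟨hne, v, hvL, hs⟩ t hts htne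
    exact ⟨htne, v, hvL,
      K.down_closed _ hs _ (Finset.union_subset_union hts (Finset.Subset.refl _)) (by simp [Finset.union_eq_empty])⟩

/-- The union of two simplicial complexes. -/
def union (K₁ K₂ : AbsSC V) : AbsSC V where
  faces := K₁.faces ∪ K₂.faces
  not_empty_mem h := by
    rcases h with h | h
    exacts [K₁.not_empty_mem h, K₂.not_empty_mem h]
  down_closed := by
    rintro s (hs | hs) t hts htne
    exacts [Or.inl (K₁.down_closed _ hs _ hts htne), Or.inr (K₂.down_closed _ hs _ hts htne)]

/-- The union of a family of simplicial complexes. -/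
def iUnionC {ι : Type} (F : ι → AbsSC V) : AbsSC V where
  faces := ⋃ i, (F i).faces
  not_empty_mem h := by
    obtain ⟨i, hi⟩ := Set.mem_iUnion.mp h
    exact (F i).not_empty_mem hi
  down_closed := by
    intro s hs t hts htne
    obtain ⟨i, hi⟩ := Set.mem_iUnion.mp hs
    exact Set.mem_iUnion.mpr ⟨i, (F i).down_closed _ hi _ hts htne⟩

/-- The `n`-skeleton of a complex: all faces with at most `n+1` vertices. -/
def skeleton (K : AbsSC V) (n : ℕ) : AbsSC V where
  faces := {σ | σ ∈ K.faces ∧ σ.card ≤ n + 1}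
  not_empty_mem h := K.not_empty_mem h.1
  down_closed := by
    rintro s ⟨hs, hcard⟩ t hts htne
    exact ⟨K.down_closed _ hs _ hts htne, le_trans (Finset.card_le_card hts) hcard⟩

/-- The simplicial complex generated by a single simplex `s` (all its nonempty subsets). -/
def simplexCx (s : Finset V) : AbsSC V where
  faces := {t | t ≠ ∅ ∧ t ⊆ s}
  not_empty_mem h := h.1 rfl
  down_closed := by
    rintro a ⟨hne, has⟩ t hta htne
    exact ⟨htne, hta.trans has⟩

/-- A maximal simplex (facet) of `K`. -/
def IsFacet (K : AbsSC V) (σ : Finset V) : Prop :=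
  σ ∈ K.faces ∧ ∀ τ ∈ K.faces, σ ⊆ τ → τ = σ

/-- `K` is a clique complex: any nonempty set of vertices which pairwise span edges is a face. -/
def IsCliqueCx (K : AbsSC V) : Prop :=
  ∀ σ : Finset V, σ ≠ ∅ → (∀ v ∈ σ, ({v} : Finset V) ∈ K.faces) →
    (∀ v ∈ σ, ∀ w ∈ σ, v ≠ w → ({v, w} : Finset V) ∈ K.faces) → σ ∈ K.faces

/-- `L` is a full subcomplex of `K`. -/
def IsFull (L K : AbsSC V) : Prop :=
  ∀ σ ∈ K.faces, (∀ v ∈ σ, ({v} : Finset V) ∈ L.faces) → σ ∈ L.faces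

end AbsSC

noncomputable section

/-- The `n`-dimensional sphere. -/
abbrev Sph (n : ℕ) : Type := Metric.sphere (0 : EuclideanSpace ℝ (Fin (n + 1))) 1

/-- A base point on the sphere. -/
def sphBase (n : ℕ) : Sph n :=
  ⟨EuclideanSpace.single 0 1, by simp⟩

/-- Relation gluing the base points of `c` copies of a pointed space to an auxiliary point. -/
inductive wedgeRel (c : ℕ) (X : Type) (x₀ : X) : Unit ⊕ Fin c × X → Unit ⊕ Fin c × X → Prop
  | glue (i : Fin c) : wedgeRel c X x₀ (Sum.inl ()) (Sum.inr (i, x₀))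

/-- The wedge sum of `c` copies of the pointed space `(X, x₀)`. -/
def Wedge (c : ℕ) (X : Type) [TopologicalSpace X] (x₀ : X) : Type := Quot (wedgeRel c X x₀)

instance (c : ℕ) (X : Type) [TopologicalSpace X] (x₀ : X) : TopologicalSpace (Wedge c X x₀) := by
  unfold Wedge; infer_instance

/-- The base point of the wedge. -/
def wedgePt (c : ℕ) (X : Type) [TopologicalSpace X] (x₀ : X) : Wedge c X x₀ :=
  Quot.mk _ (Sum.inl ())

/-- The wedge sum of `c` copies of the `n`-sphere. -/
abbrev WedgeSph (n c : ℕ) : Type := Wedge c (Sph n) (sphBase n)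

/-- The base point of a wedge of spheres. -/
def wedgeSphPt (n c : ℕ) : WedgeSph n c := wedgePt c _ _

/-- Relation gluing the two base points in a binary wedge. -/
inductive wedge2Rel (X Y : Type) (x₀ : X) (y₀ : Y) : X ⊕ Y → X ⊕ Y → Prop
  | glue : wedge2Rel X Y x₀ y₀ (Sum.inl x₀) (Sum.inr y₀)

/-- The wedge sum `X ∨ Y` of two pointed spaces. -/
def Wedge2 (X Y : Type) [TopologicalSpace X] [TopologicalSpace Y] (x₀ : X) (y₀ : Y) : Type :=
  Quot (wedge2Rel X Y x₀ y₀)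

instance (X Y : Type) [TopologicalSpace X] [TopologicalSpace Y] (x₀ : X) (y₀ : Y) :
    TopologicalSpace (Wedge2 X Y x₀ y₀) := by unfold Wedge2; infer_instance

/-- Relation collapsing the top and bottom of the cylinder `X × [0,1]` to two cone points. -/
inductive suspRel (X : Type) : X × unitInterval ⊕ Bool → X × unitInterval ⊕ Bool → Prop
  | zero (x : X) : suspRel X (Sum.inl (x, 0)) (Sum.inr false)
  | one (x : X) : suspRel X (Sum.inl (x, 1)) (Sum.inr true)

/-- The (unreduced) suspension `Σ X`. -/
def Susp (X : Type) [TopologicalSpace X] : Type := Quot (suspRel X)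

instance (X : Type) [TopologicalSpace X] : TopologicalSpace (Susp X) := by
  unfold Susp; infer_instance

/-- The north cone point of the suspension. -/
def suspNorth (X : Type) [TopologicalSpace X] : Susp X := Quot.mk _ (Sum.inr true)

end

/-- The Vietoris–Rips complex at scale `r` of a collection `F` of finite subsets of `ℕ`,
with respect to the symmetric difference metric `d(A,B) = |A Δ B|`. -/
def VRc (F : Set (Finset ℕ)) (r : ℕ) : AbsSC (Finset ℕ) where
  faces := {σ | σ.Nonempty ∧ (∀ A ∈ σ, A ∈ F) ∧
    ∀ A ∈ σ, ∀ B ∈ σ, (symmDiff A B).card ≤ r}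
  not_empty_mem h := by simpa using h.1
  down_closed := by
    rintro s ⟨hne, hF, hd⟩ t hts htne
    exact ⟨Finset.nonempty_iff_ne_empty.mpr htne, fun A hA => hF A (hts hA),
      fun A hA B hB => hd A (hts hA) B (hts hB)⟩

/-- `F_n^m`: all `n`-element subsets of `[m] = {1, …, m}`. -/
def Fnm (m n : ℕ) : Set (Finset ℕ) := {A | A ⊆ Finset.Icc 1 m ∧ A.card = n}

/-- `F_{≤ n}^m`: all subsets of `[m]` of cardinality at most `n`. -/
def Fle (m n : ℕ) : Set (Finset ℕ) := {A | A ⊆ Finset.Icc 1 m ∧ A.card ≤ n}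

/-- The simplex `N[C] = {A : C ⊆ A, |A \ C| = 1}` inside `[m]`. -/
def NSimp (m : ℕ) (C : Finset ℕ) : Finset (Finset ℕ) :=
  (Finset.Icc 1 m \ C).image (fun x => insert x C)

/-- The simplex `L[S]`: all subsets of `S` obtained by removing one element. -/
def LSimp (S : Finset ℕ) : Finset (Finset ℕ) := S.image (fun x => S.erase x)

/-- The total order `≺`: first compare cardinalities, then compare the increasing
enumerations lexicographically. -/
def precLT (A B : Finset ℕ) : Prop :=
  A.card < B.card ∨
    (A.card = B.card ∧ List.Lex (· < ·) (A.sort (· ≤ ·)) (B.sort (· ≤ ·)))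

/-- `A ⪯ B`. -/
def precLE (A B : Finset ℕ) : Prop := precLT A B ∨ A = B

/-- `F^m_{≺ A}`: all subsets of `[m]` strictly preceding `A`. -/
def FprecLT (m : ℕ) (A : Finset ℕ) : Set (Finset ℕ) :=
  {B | B ⊆ Finset.Icc 1 m ∧ precLT B A}

/-- `F^m_{⪯ A}`: all subsets of `[m]` preceding (or equal to) `A`. -/
def FprecLE (m : ℕ) (A : Finset ℕ) : Set (Finset ℕ) :=
  {B | B ⊆ Finset.Icc 1 m ∧ precLE B A}

/-- The `j`-th value (0-indexed) of an enumeration `i : Fin n → ℕ`. -/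
def ith {n : ℕ} (i : Fin n → ℕ) (j : ℕ) : ℕ := if h : j < n then i ⟨j, h⟩ else 0

/-- The `ℓ`-th entry (1-indexed) of the enumeration, as an integer, with `i_0 = -1`. -/
def ivZ {n : ℕ} (i : Fin n → ℕ) (ℓ : ℕ) : ℤ := if ℓ = 0 then -1 else (ith i (ℓ - 1) : ℤ)

/-- For `B = i_1 i_2 ⋯ i_n` (increasing), with `d_1 = i_1` and
`d_ℓ = i_ℓ - (i_{ℓ-1} + 1)`, `r_B = Σ_{k=2}^{n-2} C(k,2) + Σ_{ℓ=1}^{n-2} d_ℓ·C(n-ℓ,2)`. -/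
def rA (B : Finset ℕ) : ℕ :=
  (∑ k ∈ Finset.Icc 2 (B.card - 2), Nat.choose k 2) +
    ∑ ℓ ∈ Finset.Icc 1 (B.card - 2),
      ((B.sort (· ≤ ·)).getD (ℓ - 1) 0 -
        (if ℓ = 1 then 0 else (B.sort (· ≤ ·)).getD (ℓ - 2) 0 + 1)) * Nat.choose (B.card - ℓ) 2

/-- For `B = i_1 i_2 ⋯ i_n` (increasing), with `c_1 = i_1 - 1` and
`c_ℓ = i_ℓ - (i_{ℓ-1} + 1)`, `s_B = Σ_{k=2}^{n-2} C(k,2) + Σ_{ℓ=1}^{n-2} c_ℓ·C(n-ℓ,2)`. -/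
def sA (B : Finset ℕ) : ℕ :=
  (∑ k ∈ Finset.Icc 2 (B.card - 2), Nat.choose k 2) +
    ∑ ℓ ∈ Finset.Icc 1 (B.card - 2),
      ((B.sort (· ≤ ·)).getD (ℓ - 1) 0 -
        (if ℓ = 1 then 1 else (B.sort (· ≤ ·)).getD (ℓ - 2) 0 + 1)) * Nat.choose (B.card - ℓ) 2

/-- `t_n = Σ_{A ⊆ [m], |A| = n} r_A`. -/
def tN (m n : ℕ) : ℕ :=
  ∑ A ∈ (Finset.Icc 1 m).powerset.filter (fun A => A.card = n), rA A

/-- `o_{m,n} = Σ { s_A : A ∈ F^m_{n+2}, min A ≥ 2 }`. -/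
def omn (m n : ℕ) : ℕ :=
  ∑ A ∈ (Finset.Icc 1 m).powerset.filter (fun A => A.card = n + 2 ∧ ∀ x ∈ A, 2 ≤ x), sA A

/-! ### Proof development for Statement 19 -/

section Stmt19Proof

open Finset

/-- The full complex `VR(F_n ∪ F_{n+1} ∪ F_{n+2}, 2)`. -/
def Kfull (m n : ℕ) : AbsSC (Finset ℕ) :=
  VRc (Fnm m n ∪ Fnm m (n + 1) ∪ Fnm m (n + 2)) 2

/-- The middle layer of a face: its elements of cardinality `n+1`. -/
def lev (n : ℕ) (σ : Finset (Finset ℕ)) : Finset (Finset ℕ) :=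
  σ.filter (fun B => B.card = n + 1)

/-- Intersection of a finite family of finsets (junk value `∅` on `∅`). -/
def capP (P : Finset (Finset ℕ)) : Finset ℕ :=
  (P.sup id).filter (fun x => ∀ B ∈ P, x ∈ B)

/-- The apex vertex associated to a clique `P` of `(n+1)`-sets. -/
def uP (n : ℕ) (P : Finset (Finset ℕ)) : Finset ℕ :=
  if (capP P).card = n then capP P
  else if (P.sup id).card = n + 2 then P.sup id
  else (capP P).erase ((capP P).sup id)

lemma sd_card (A B : Finset ℕ) : (symmDiff A B).card = (A \ B).card + (B \ A).card := by
  rw [symmDiff_def, Finset.sup_eq_union, Finset.card_union_of_disjoint disjoint_sdiff_sdiff]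

lemma subset_of_sd_le (A B : Finset ℕ) (h : (symmDiff A B).card ≤ 2) (hc : A.card < B.card) :
    A ⊆ B := by
  have h1 := Finset.card_sdiff_add_card_inter A B
  have h2 := Finset.card_sdiff_add_card_inter B A
  rw [Finset.inter_comm] at h2
  rw [sd_card] at h
  have h3 : (A \ B).card = 0 := by omega
  rw [Finset.card_eq_zero, Finset.sdiff_eq_empty_iff_subset] at h3
  exact h3

lemma sd_card_le_of_subset (A B : Finset ℕ) (h : A ⊆ B) (hc : B.card ≤ A.card + 2) :
    (symmDiff A B).card ≤ 2 := by
  have h1 := Finset.card_sdiff_add_card_inter A B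
  have h2 := Finset.card_sdiff_add_card_inter B A
  rw [Finset.inter_comm] at h2
  have h0 : (A \ B) = ∅ := Finset.sdiff_eq_empty_iff_subset.mpr h
  rw [sd_card, h0]
  have hAB : (A ∩ B).card = A.card := by
    rw [Finset.inter_eq_left.mpr h]
  simp only [Finset.card_empty]
  omega

lemma sd_le_of_subsets (A B C : Finset ℕ) (hA : A ⊆ C) (hB : B ⊆ C) :
    (symmDiff A B).card ≤ (C.card - B.card) + (C.card - A.card) := by
  rw [sd_card]
  have h1 : A \ B ⊆ C \ B := Finset.sdiff_subset_sdiff hA (Finset.Subset.refl B)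
  have h2 : B \ A ⊆ C \ A := Finset.sdiff_subset_sdiff hB (Finset.Subset.refl A)
  have := Finset.card_le_card h1
  have := Finset.card_le_card h2
  rw [Finset.card_sdiff_of_subset hB] at *
  rw [Finset.card_sdiff_of_subset hA] at *
  omega

lemma capP_subset {P : Finset (Finset ℕ)} {B : Finset ℕ} (hB : B ∈ P) : capP P ⊆ B :=
  fun x hx => (Finset.mem_filter.mp hx).2 B hB

lemma subset_capP {P : Finset (Finset ℕ)} {X : Finset ℕ} (hP : P.Nonempty)
    (h : ∀ B ∈ P, X ⊆ B) : X ⊆ capP P := by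
  intro x hx
  obtain ⟨B₀, hB₀⟩ := hP
  refine Finset.mem_filter.mpr ⟨?_, fun B hB => h B hB hx⟩
  exact (Finset.le_sup (f := id) hB₀ : B₀ ⊆ P.sup id) (h B₀ hB₀ hx)

lemma mem_bigF {m n : ℕ} {X : Finset ℕ}
    (h : X ∈ Fnm m n ∪ Fnm m (n + 1) ∪ Fnm m (n + 2)) :
    X ⊆ Finset.Icc 1 m ∧ (X.card = n ∨ X.card = n + 1 ∨ X.card = n + 2) := by
  rcases h with (h | h) | h
  · exact ⟨h.1, Or.inl h.2⟩
  · exact ⟨h.1, Or.inr (Or.inl h.2)⟩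
  · exact ⟨h.1, Or.inr (Or.inr h.2)⟩

/-- Johnson clique lemma: a clique of `(n+1)`-sets (pairwise symmetric difference `≤ 2`)
with at least two elements whose common intersection does not have size `n` is contained
in a common `(n+2)`-set, namely its union. -/
lemma johnson {n : ℕ} (hn : 1 ≤ n) (P : Finset (Finset ℕ)) (h2 : 2 ≤ P.card)
    (hcard : ∀ B ∈ P, B.card = n + 1)
    (hpair : ∀ B ∈ P, ∀ B' ∈ P, (symmDiff B B').card ≤ 2)
    (hS : (capP P).card ≠ n) : (P.sup id).card = n + 2 := by
  obtain ⟨B₁, hB₁, B₂, hB₂, hne⟩ := Finset.one_lt_card.mp h2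
  have hc₁ := hcard B₁ hB₁
  have hc₂ := hcard B₂ hB₂
  -- the pairwise intersection of two distinct members has size n
  have hint : (B₁ ∩ B₂).card = n := by
    have hp := hpair B₁ hB₁ B₂ hB₂
    have h1 := Finset.card_sdiff_add_card_inter B₁ B₂
    have h2' := Finset.card_sdiff_add_card_inter B₂ B₁
    rw [Finset.inter_comm] at h2'
    rw [sd_card] at hp
    have hle : (B₁ ∩ B₂).card ≤ B₁.card := Finset.card_le_card Finset.inter_subset_left
    by_contra hco
    have hi : (B₁ ∩ B₂).card = n + 1 := by omega
    have e1 : B₁ ∩ B₂ = B₁ := Finset.eq_of_subset_of_card_le Finset.inter_subset_left (by omega)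
    have e2 : B₁ ∩ B₂ = B₂ := Finset.eq_of_subset_of_card_le Finset.inter_subset_right (by omega)
    exact hne (by rw [← e1, e2])
  -- one-sided difference is a singleton
  have hside : ∀ X ∈ P, ∀ Y ∈ P, ∀ x, x ∈ X → x ∉ Y → X \ Y = {x} := by
    intro X hX Y hY x hx hxy
    have hp := hpair X hX Y hY
    rw [sd_card] at hp
    have h1 := Finset.card_sdiff_add_card_inter X Y
    have h2' := Finset.card_sdiff_add_card_inter Y X
    rw [Finset.inter_comm] at h2'
    have hcX := hcard X hX
    have hcY := hcard Y hY
    have hxm : x ∈ X \ Y := Finset.mem_sdiff.mpr ⟨hx, hxy⟩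
    have hsing : ({x} : Finset ℕ) ⊆ X \ Y := Finset.singleton_subset_iff.mpr hxm
    have hcards : (X \ Y).card ≤ 1 := by omega
    exact (Finset.eq_of_subset_of_card_le hsing (by simpa using hcards)).symm
  have hmain : ∀ B₃ ∈ P, B₃ ⊆ B₁ ∪ B₂ := by
    intro B₃ hB₃
    by_contra hsub
    obtain ⟨z, hz3, hz12⟩ := Finset.not_subset.mp hsub
    have hz1 : z ∉ B₁ := fun h => hz12 (Finset.mem_union_left _ h)
    have hz2 : z ∉ B₂ := fun h => hz12 (Finset.mem_union_right _ h)
    have e31 : B₃ \ B₁ = {z} := hside B₃ hB₃ B₁ hB₁ z hz3 hz1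
    have e32 : B₃ \ B₂ = {z} := hside B₃ hB₃ B₂ hB₂ z hz3 hz2
    have h31 : B₃.erase z ⊆ B₁ := by
      intro x hx
      obtain ⟨hxz, hxB₃⟩ := Finset.mem_erase.mp hx
      by_contra hxn
      have : x ∈ B₃ \ B₁ := Finset.mem_sdiff.mpr ⟨hxB₃, hxn⟩
      rw [e31, Finset.mem_singleton] at this
      exact hxz this
    have h32 : B₃.erase z ⊆ B₂ := by
      intro x hx
      obtain ⟨hxz, hxB₃⟩ := Finset.mem_erase.mp hx
      by_contra hxn
      have : x ∈ B₃ \ B₂ := Finset.mem_sdiff.mpr ⟨hxB₃, hxn⟩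
      rw [e32, Finset.mem_singleton] at this
      exact hxz this
    have hS₀ : B₃.erase z = B₁ ∩ B₂ := by
      apply Finset.eq_of_subset_of_card_le (Finset.subset_inter h31 h32)
      rw [hint, Finset.card_erase_of_mem hz3, hcard B₃ hB₃]
      omega
    -- every member contains B₁ ∩ B₂
    have hall : ∀ B₄ ∈ P, B₁ ∩ B₂ ⊆ B₄ := by
      intro B₄ hB₄
      by_contra hnsub
      obtain ⟨s, hsS₀, hsB₄⟩ := Finset.not_subset.mp hnsub
      have hsB₁ : s ∈ B₁ := Finset.inter_subset_left hsS₀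
      have hsB₂ : s ∈ B₂ := Finset.inter_subset_right hsS₀
      have hsB₃ : s ∈ B₃ := Finset.erase_subset z B₃ (hS₀ ▸ hsS₀)
      have e34 : B₃ \ B₄ = {s} := by
        refine hside B₃ hB₃ B₄ hB₄ s hsB₃ hsB₄
      have hzB₄ : z ∈ B₄ := by
        by_contra h
        have : z ∈ B₃ \ B₄ := Finset.mem_sdiff.mpr ⟨hz3, h⟩
        rw [e34, Finset.mem_singleton] at this
        exact hz1 (this ▸ hsB₁)
      have hd1 : (B₁ \ B₂).card = 1 := by
        have h1 := Finset.card_sdiff_add_card_inter B₁ B₂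
        omega
      obtain ⟨a₁, ha1⟩ := Finset.card_eq_one.mp hd1
      have ha₁m : a₁ ∈ B₁ \ B₂ := ha1 ▸ Finset.mem_singleton_self a₁
      have ha₁B₁ : a₁ ∈ B₁ := (Finset.mem_sdiff.mp ha₁m).1
      have ha₁nB₂ : a₁ ∉ B₂ := (Finset.mem_sdiff.mp ha₁m).2
      have hd2 : (B₂ \ B₁).card = 1 := by
        have h1 := Finset.card_sdiff_add_card_inter B₂ B₁
        rw [Finset.inter_comm] at h1
        omega
      obtain ⟨a₂, ha2⟩ := Finset.card_eq_one.mp hd2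
      have ha₂m : a₂ ∈ B₂ \ B₁ := ha2 ▸ Finset.mem_singleton_self a₂
      have ha₂B₂ : a₂ ∈ B₂ := (Finset.mem_sdiff.mp ha₂m).1
      have ha₂nB₁ : a₂ ∉ B₁ := (Finset.mem_sdiff.mp ha₂m).2
      have e14 : B₁ \ B₄ = {s} := hside B₁ hB₁ B₄ hB₄ s hsB₁ hsB₄
      have e24 : B₂ \ B₄ = {s} := hside B₂ hB₂ B₄ hB₄ s hsB₂ hsB₄
      have ha₁B₄ : a₁ ∈ B₄ := by
        by_contra h
        have : a₁ ∈ B₁ \ B₄ := Finset.mem_sdiff.mpr ⟨ha₁B₁, h⟩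
        rw [e14, Finset.mem_singleton] at this
        exact ha₁nB₂ (this ▸ hsB₂)
      have ha₂B₄ : a₂ ∈ B₄ := by
        by_contra h
        have : a₂ ∈ B₂ \ B₄ := Finset.mem_sdiff.mpr ⟨ha₂B₂, h⟩
        rw [e24, Finset.mem_singleton] at this
        exact ha₂nB₁ (this ▸ hsB₁)
      have herase : (B₁ ∩ B₂).erase s ⊆ B₄ := by
        intro x hx
        obtain ⟨hxs, hxm⟩ := Finset.mem_erase.mp hx
        by_contra h
        have : x ∈ B₁ \ B₄ := Finset.mem_sdiff.mpr ⟨Finset.inter_subset_left hxm, h⟩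
        rw [e14, Finset.mem_singleton] at this
        exact hxs this
      -- the set {z, a₁, a₂} ∪ ((B₁ ∩ B₂).erase s) is inside B₄ and too big
      have hTsub : insert z (insert a₁ (insert a₂ ((B₁ ∩ B₂).erase s))) ⊆ B₄ := by
        intro x hx
        rcases Finset.mem_insert.mp hx with rfl | hx
        · exact hzB₄
        rcases Finset.mem_insert.mp hx with rfl | hx
        · exact ha₁B₄
        rcases Finset.mem_insert.mp hx with rfl | hx
        · exact ha₂B₄
        · exact herase hx
      have hz_ni : z ∉ insert a₁ (insert a₂ ((B₁ ∩ B₂).erase s)) := by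
        simp only [Finset.mem_insert, Finset.mem_erase]
        push_neg
        refine ⟨fun h => hz1 (h ▸ ha₁B₁), fun h => hz2 (h ▸ ha₂B₂), fun _ h => hz1 (Finset.inter_subset_left h)⟩
      have ha₁_ni : a₁ ∉ insert a₂ ((B₁ ∩ B₂).erase s) := by
        simp only [Finset.mem_insert, Finset.mem_erase]
        push_neg
        refine ⟨fun h => ha₁nB₂ (h ▸ ha₂B₂), fun _ h => ha₁nB₂ (Finset.inter_subset_right h)⟩
      have ha₂_ni : a₂ ∉ (B₁ ∩ B₂).erase s := by
        intro h
        exact ha₂nB₁ (Finset.inter_subset_left (Finset.mem_of_mem_erase h))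
      have hcardT : (insert z (insert a₁ (insert a₂ ((B₁ ∩ B₂).erase s)))).card = n + 2 := by
        rw [Finset.card_insert_of_notMem hz_ni, Finset.card_insert_of_notMem ha₁_ni,
          Finset.card_insert_of_notMem ha₂_ni, Finset.card_erase_of_mem hsS₀, hint]
        omega
      have := Finset.card_le_card hTsub
      rw [hcardT, hcard B₄ hB₄] at this
      omega
    have hcap : capP P = B₁ ∩ B₂ := by
      apply Finset.Subset.antisymm
      · exact Finset.subset_inter (capP_subset hB₁) (capP_subset hB₂)
      · exact subset_capP ⟨B₁, hB₁⟩ hall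
    exact hS (by rw [hcap, hint])
  have hDeq : P.sup id = B₁ ∪ B₂ := by
    apply Finset.Subset.antisymm
    · exact Finset.sup_le (fun B hB => hmain B hB)
    · exact Finset.union_subset (Finset.le_sup (f := id) hB₁) (Finset.le_sup (f := id) hB₂)
  rw [hDeq]
  have := Finset.card_union_add_card_inter B₁ B₂
  omega

/-- **Key combinatorial lemma**: for any face `σ` of the full complex whose middle layer
`P = lev n σ` is nonempty, the apex `uP n P` can be added to `σ` to yield a face,
and it is not itself in the middle layer. -/
lemma key_lemma {m n : ℕ} (hn : 1 ≤ n) {σ : Finset (Finset ℕ)}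
    (hσ : σ ∈ (Kfull m n).faces) (hP : (lev n σ).Nonempty) :
    (uP n (lev n σ)).card ≠ n + 1 ∧ insert (uP n (lev n σ)) σ ∈ (Kfull m n).faces := by
  obtain ⟨hfne, hfF, hfd⟩ := hσ
  set P := lev n σ with hPdef
  have hPσ : P ⊆ σ := Finset.filter_subset _ _
  have hcards : ∀ B ∈ P, B.card = n + 1 := fun B hB => (Finset.mem_filter.mp hB).2
  have hIcc : ∀ X ∈ σ, X ⊆ Finset.Icc 1 m := fun X hX => (mem_bigF (hfF X hX)).1
  have hXcards : ∀ X ∈ σ, X.card = n ∨ X.card = n + 1 ∨ X.card = n + 2 :=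
    fun X hX => (mem_bigF (hfF X hX)).2
  obtain ⟨B₀, hB₀⟩ := hP
  have hB₀σ : B₀ ∈ σ := hPσ hB₀
  have hB₀c : B₀.card = n + 1 := hcards B₀ hB₀
  have hsmall : ∀ X ∈ σ, X.card = n → ∀ B ∈ P, X ⊆ B := fun X hX hXc B hB =>
    subset_of_sd_le X B (hfd X hX B (hPσ hB)) (by rw [hXc, hcards B hB]; omega)
  have hbig : ∀ X ∈ σ, X.card = n + 2 → ∀ B ∈ P, B ⊆ X := fun X hX hXc B hB =>
    subset_of_sd_le B X (hfd B (hPσ hB) X hX) (by rw [hXc, hcards B hB]; omega)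
  -- main claim
  have hmain : ((uP n P).card = n ∨ (uP n P).card = n + 2) ∧ uP n P ⊆ Finset.Icc 1 m ∧
      ∀ X ∈ σ, (symmDiff (uP n P) X).card ≤ 2 := by
    rw [uP]
    split_ifs with h1 h2
    · -- branch 1 : u = capP P
      refine ⟨Or.inl h1, (capP_subset hB₀).trans (hIcc B₀ hB₀σ), ?_⟩
      intro X hX
      rcases hXcards X hX with hXc | hXc | hXc
      · -- X has card n : X = capP P
        have hXsub : X ⊆ capP P := subset_capP ⟨B₀, hB₀⟩ (fun B hB => hsmall X hX hXc B hB)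
        have : X = capP P := Finset.eq_of_subset_of_card_le hXsub (by rw [h1, hXc])
        rw [← this, symmDiff_self]
        simp
      · -- X has card n+1 : X ∈ P and capP P ⊆ X
        have hXP : X ∈ P := Finset.mem_filter.mpr ⟨hX, hXc⟩
        exact sd_card_le_of_subset _ _ (capP_subset hXP) (by rw [hXc, h1]; omega)
      · -- X has card n+2 : capP P ⊆ B₀ ⊆ X
        exact sd_card_le_of_subset _ _ ((capP_subset hB₀).trans (hbig X hX hXc B₀ hB₀))
          (by rw [hXc, h1])
    · -- branch 2 : u = P.sup id
      refine ⟨Or.inr h2, Finset.sup_le (fun B hB => hIcc B (hPσ hB)), ?_⟩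
      intro X hX
      rcases hXcards X hX with hXc | hXc | hXc
      · -- X card n : X ⊆ B₀ ⊆ sup
        have : X ⊆ P.sup id := (hsmall X hX hXc B₀ hB₀).trans (Finset.le_sup (f := id) hB₀)
        rw [symmDiff_comm]
        exact sd_card_le_of_subset _ _ this (by rw [hXc, h2])
      · -- X card n+1 : X ∈ P, X ⊆ sup
        have hXP : X ∈ P := Finset.mem_filter.mpr ⟨hX, hXc⟩
        rw [symmDiff_comm]
        exact sd_card_le_of_subset _ _ (Finset.le_sup (f := id) hXP) (by rw [hXc, h2]; omega)
      · -- X card n+2 : sup ⊆ X hence X = sup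
        have hsub : P.sup id ⊆ X := Finset.sup_le (fun B hB => hbig X hX hXc B hB)
        have : P.sup id = X := Finset.eq_of_subset_of_card_le hsub (by rw [hXc, h2])
        rw [this, symmDiff_self]
        simp
    · -- branch 3 : P = {B}, u = B.erase (B.sup id)
      have hP1 : P.card = 1 := by
        have hle : P.card ≤ 1 := by
          by_contra h'
          exact h2 (johnson hn P (by omega) hcards
            (fun B hB B' hB' => hfd B (hPσ hB) B' (hPσ hB')) h1)
        have : 1 ≤ P.card := Finset.card_pos.mpr ⟨B₀, hB₀⟩
        omega
      obtain ⟨B, hPB⟩ := Finset.card_eq_one.mp hP1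
      have hBσ : B ∈ σ := hPσ (by rw [hPB]; exact Finset.mem_singleton_self B)
      have hBc : B.card = n + 1 := hcards B (by rw [hPB]; exact Finset.mem_singleton_self B)
      have hcap : capP P = B := by
        rw [hPB]
        ext x
        simp [capP]
      have hBne : B.Nonempty := Finset.card_pos.mp (by omega)
      have hsup_mem : B.sup id ∈ B := by
        obtain ⟨i, hi, hieq⟩ := Finset.exists_mem_eq_sup B hBne id
        rw [hieq]
        exact hi
      rw [hcap]
      have hucard : (B.erase (B.sup id)).card = n := by
        rw [Finset.card_erase_of_mem hsup_mem, hBc]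
        omega
      have husub : B.erase (B.sup id) ⊆ B := Finset.erase_subset _ _
      refine ⟨Or.inl hucard, husub.trans (hIcc B hBσ), ?_⟩
      intro X hX
      rcases hXcards X hX with hXc | hXc | hXc
      · -- X card n, X ⊆ B: both inside B
        have hXB : X ⊆ B := hsmall X hX hXc B (by rw [hPB]; exact Finset.mem_singleton_self B)
        have := sd_le_of_subsets (B.erase (B.sup id)) X B husub hXB
        rw [hBc, hXc, hucard] at this
        omega
      · -- X card n+1 : X = B
        have hXP : X ∈ P := Finset.mem_filter.mpr ⟨hX, hXc⟩
        rw [hPB, Finset.mem_singleton] at hXP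
        subst hXP
        exact sd_card_le_of_subset _ _ husub (by omega)
      · -- X card n+2 : B ⊆ X
        have hBX : B ⊆ X := hbig X hX hXc B (by rw [hPB]; exact Finset.mem_singleton_self B)
        exact sd_card_le_of_subset _ _ (husub.trans hBX) (by rw [hXc, hucard])
  obtain ⟨hcardu, hsubu, hcloseu⟩ := hmain
  constructor
  · omega
  · refine ⟨⟨uP n P, Finset.mem_insert_self _ _⟩, ?_, ?_⟩
    · intro A hA
      rcases Finset.mem_insert.mp hA with rfl | hA
      · rcases hcardu with hc | hc
        · exact Or.inl (Or.inl ⟨hsubu, hc⟩)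
        · exact Or.inr ⟨hsubu, hc⟩
      · exact hfF A hA
    · intro A hA B hB
      rcases Finset.mem_insert.mp hA with rfl | hA <;> rcases Finset.mem_insert.mp hB with rfl | hB
      · rw [symmDiff_self]; simp
      · exact hcloseu B hB
      · rw [symmDiff_comm]; exact hcloseu A hA
      · exact hfd A hA B hB

end Stmt19Proof


section Stmt19Top

open Finset

/-- All `(n+1)`-subsets of `[m]`. -/
def Phi (m n : ℕ) : Finset (Finset ℕ) :=
  (Finset.Icc 1 m).powerset.filter (fun B => B.card = n + 1)

/-- The subcomplex of faces with at most `j` elements in the middle layer. -/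
def Klev (m n j : ℕ) : AbsSC (Finset ℕ) where
  faces := {σ | σ ∈ (Kfull m n).faces ∧ (lev n σ).card ≤ j}
  not_empty_mem h := (Kfull m n).not_empty_mem h.1
  down_closed := by
    rintro s ⟨hs, hl⟩ t hts htne
    exact ⟨(Kfull m n).down_closed s hs t hts htne,
      le_trans (Finset.card_le_card (Finset.filter_subset_filter _ hts)) hl⟩

lemma Klev_subset (m n j : ℕ) : (Klev m n j).faces ⊆ (Klev m n (j + 1)).faces :=
  fun _ h => ⟨h.1, h.2.trans (Nat.le_succ j)⟩

/-- The `j`-th largest coordinate among the middle-layer coordinates. -/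
noncomputable def lamF (m n j : ℕ) (f : Finset ℕ → ℝ) : ℝ :=
  ((Phi m n).powersetCard j).fold max 0 (fun T => T.fold min 1 f)

open Classical in
/-- The set of middle-layer vertices carrying nonzero weight. -/
noncomputable def PF (m n : ℕ) (f : Finset ℕ → ℝ) : Finset (Finset ℕ) :=
  (Phi m n).filter (fun B => f B ≠ 0)

/-- The total mass to transfer to the apex. -/
noncomputable def TF (m n j : ℕ) (f : Finset ℕ → ℝ) : ℝ :=
  ∑ B ∈ Phi m n, min (f B) (lamF m n j f)

/-- The retraction map on weight functions. -/
noncomputable def rmap (m n j : ℕ) (f : Finset ℕ → ℝ) : Finset ℕ → ℝ := fun v =>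
  if v.card = n + 1 then f v - min (f v) (lamF m n j f)
  else if uP n (PF m n f) = v then f v + TF m n j f else f v

lemma lam_nonneg (m n j : ℕ) (f : Finset ℕ → ℝ) : 0 ≤ lamF m n j f :=
  (Finset.le_fold_max (0 : ℝ)).mpr (Or.inl le_rfl)

lemma lamF_eq_zero {m n j : ℕ} {f : Finset ℕ → ℝ} (hf : ∀ v, 0 ≤ f v)
    (hc : (PF m n f).card < j) : lamF m n j f = 0 := by
  classical
  refine le_antisymm ((Finset.fold_max_le (0 : ℝ)).mpr ⟨le_rfl, ?_⟩) (lam_nonneg m n j f)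
  intro T hT
  obtain ⟨hTsub, hTcard⟩ := Finset.mem_powersetCard.mp hT
  have hex : ∃ B ∈ T, B ∉ PF m n f := by
    by_contra h
    push_neg at h
    have := Finset.card_le_card (fun x hx => h x hx)
    omega
  obtain ⟨B, hBT, hBn⟩ := hex
  have hfB : f B = 0 := by
    by_contra h
    exact hBn (Finset.mem_filter.mpr ⟨hTsub hBT, h⟩)
  exact (Finset.fold_min_le (0 : ℝ)).mpr (Or.inr ⟨B, hBT, le_of_eq hfB⟩)

lemma lamF_pos {m n j : ℕ} {f : Finset ℕ → ℝ} (hf0 : ∀ v, 0 ≤ f v)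
    (hc : (PF m n f).card = j) (hj : 1 ≤ j) : 0 < lamF m n j f := by
  classical
  have hmem : PF m n f ∈ (Phi m n).powersetCard j :=
    Finset.mem_powersetCard.mpr ⟨Finset.filter_subset _ _, hc⟩
  have hinner : 0 < (PF m n f).fold min 1 f :=
    (Finset.lt_fold_min (0 : ℝ)).mpr ⟨one_pos,
      fun B hB => lt_of_le_of_ne (hf0 B) (Ne.symm (Finset.mem_filter.mp hB).2)⟩
  exact lt_of_lt_of_le hinner ((Finset.le_fold_max _).mpr (Or.inr ⟨_, hmem, le_rfl⟩))

lemma PF_card_ge_of_lamF_pos {m n j : ℕ} {f : Finset ℕ → ℝ}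
    (hl : 0 < lamF m n j f) : j ≤ (PF m n f).card := by
  classical
  have hex : ∃ T ∈ (Phi m n).powersetCard j, 0 < T.fold min 1 f := by
    by_contra h
    push_neg at h
    have : lamF m n j f ≤ 0 := (Finset.fold_max_le (0 : ℝ)).mpr ⟨le_rfl, fun T hT => h T hT⟩
    linarith
  obtain ⟨T, hT, hTpos⟩ := hex
  obtain ⟨hTsub, hTcard⟩ := Finset.mem_powersetCard.mp hT
  have hTPF : T ⊆ PF m n f := by
    intro B hB
    refine Finset.mem_filter.mpr ⟨hTsub hB, ?_⟩
    have hle : T.fold min 1 f ≤ f B := (Finset.fold_min_le _).mpr (Or.inr ⟨B, hB, le_rfl⟩)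
    exact ne_of_gt (lt_of_lt_of_le hTpos hle)
  calc j = T.card := hTcard.symm
    _ ≤ (PF m n f).card := Finset.card_le_card hTPF

lemma exists_le_lamF {m n j : ℕ} {f : Finset ℕ → ℝ} (hf1 : ∀ v, f v ≤ 1)
    (hc : (PF m n f).card = j) (hj : 1 ≤ j) :
    ∃ B ∈ PF m n f, f B ≤ lamF m n j f := by
  classical
  by_contra h
  push_neg at h
  have hne : (PF m n f).Nonempty := Finset.card_pos.mp (by omega)
  obtain ⟨B₁, hB₁⟩ := hne
  have hl1 : lamF m n j f < 1 := lt_of_lt_of_le (h B₁ hB₁) (hf1 B₁)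
  have hinner : lamF m n j f < (PF m n f).fold min 1 f :=
    (Finset.lt_fold_min _).mpr ⟨hl1, h⟩
  have hle : (PF m n f).fold min 1 f ≤ lamF m n j f :=
    (Finset.le_fold_max _).mpr (Or.inr ⟨_,
      Finset.mem_powersetCard.mpr ⟨Finset.filter_subset _ _, hc⟩, le_rfl⟩)
  linarith

lemma TF_nonneg {m n j : ℕ} {f : Finset ℕ → ℝ} (hf0 : ∀ v, 0 ≤ f v) : 0 ≤ TF m n j f :=
  Finset.sum_nonneg fun B _ => le_min (hf0 B) (lam_nonneg m n j f)

lemma TF_eq_zero {m n j : ℕ} {f : Finset ℕ → ℝ} (hf0 : ∀ v, 0 ≤ f v)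
    (hl : lamF m n j f = 0) : TF m n j f = 0 :=
  Finset.sum_eq_zero fun B _ => by rw [hl]; exact min_eq_right (hf0 B)

lemma rmap_eq_self {m n j : ℕ} {f : Finset ℕ → ℝ} (hf0 : ∀ v, 0 ≤ f v)
    (hl : lamF m n j f = 0) : rmap m n j f = f := by
  funext v
  rw [rmap]
  split_ifs with h1 h2
  · rw [hl, min_eq_right (hf0 v), sub_zero]
  · rw [TF_eq_zero hf0 hl, add_zero]
  · rfl

lemma rmap_zero_out {m n j : ℕ} {f : Finset ℕ → ℝ} {v : Finset ℕ}
    (hvu : uP n (PF m n f) ≠ v) (hfv : f v = 0) : rmap m n j f v = 0 := by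
  rw [rmap]
  split_ifs with h1
  · rw [hfv, min_eq_left (lam_nonneg m n j f), sub_zero]
  · exact hfv

/-- Canonical support of a point of the realization. -/
lemma canonical_supp {K : AbsSC (Finset ℕ)} (f : K.space) :
    ∃ σ ∈ K.faces, (∀ v, f.1 v ≠ 0 → v ∈ σ) ∧ (∀ v ∈ σ, f.1 v ≠ 0) ∧ ∑ v ∈ σ, f.1 v = 1 := by
  classical
  obtain ⟨hpos, s, hs, hsupp, hsum⟩ := f.2
  have hsum' : ∑ v ∈ s.filter (fun v => f.1 v ≠ 0), f.1 v = 1 := by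
    rw [Finset.sum_filter_ne_zero]; exact hsum
  have hne : (s.filter (fun v => f.1 v ≠ 0)).Nonempty :=
    Finset.nonempty_of_sum_ne_zero (by rw [hsum']; norm_num)
  refine ⟨s.filter (fun v => f.1 v ≠ 0),
    K.down_closed s hs _ (Finset.filter_subset _ _) (Finset.nonempty_iff_ne_empty.mp hne),
    fun v hv => Finset.mem_filter.mpr ⟨hsupp v hv, hv⟩,
    fun v hv => (Finset.mem_filter.mp hv).2, hsum'⟩

lemma coord_le_one {K : AbsSC (Finset ℕ)} (f : K.space) (v : Finset ℕ) : f.1 v ≤ 1 := by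
  obtain ⟨σ, hσ, hsupp, hnz, hsum⟩ := canonical_supp f
  by_cases h : f.1 v = 0
  · rw [h]; norm_num
  · calc f.1 v ≤ ∑ w ∈ σ, f.1 w :=
        Finset.single_le_sum (fun i _ => f.2.1 i) (hsupp v h)
      _ = 1 := hsum

lemma PF_eq_lev {m n j : ℕ} (f : (Klev m n j).space) {σ : Finset (Finset ℕ)}
    (hσf : σ ∈ (Klev m n j).faces) (hsupp : ∀ v, f.1 v ≠ 0 → v ∈ σ)
    (hnz : ∀ v ∈ σ, f.1 v ≠ 0) : PF m n f.1 = lev n σ := by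
  classical
  ext B
  simp only [PF, lev, Phi, Finset.mem_filter, Finset.mem_powerset]
  constructor
  · rintro ⟨⟨_, hcard⟩, hne⟩
    exact ⟨hsupp B hne, hcard⟩
  · rintro ⟨hBσ, hcard⟩
    exact ⟨⟨(mem_bigF (hσf.1.2.1 B hBσ)).1, hcard⟩, hnz B hBσ⟩

lemma PF_card_le {m n j : ℕ} (f : (Klev m n j).space) : (PF m n f.1).card ≤ j := by
  obtain ⟨σ, hσ, hsupp, hnz, _⟩ := canonical_supp f
  rw [PF_eq_lev f hσ hsupp hnz]
  exact hσ.2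

lemma rmap_nonneg {m n j : ℕ} (f : (Klev m n (j + 1)).space) (v : Finset ℕ) :
    0 ≤ rmap m n (j + 1) f.1 v := by
  rw [rmap]
  split_ifs with h1 h2
  · exact sub_nonneg.mpr (min_le_left _ _)
  · exact add_nonneg (f.2.1 v) (TF_nonneg f.2.1)
  · exact f.2.1 v

/-- Bundle of facts used for the retraction in the positive-λ case. -/
lemma main_facts {m n j : ℕ} (hn : 1 ≤ n) (f : (Klev m n (j + 1)).space)
    (hl : 0 < lamF m n (j + 1) f.1) :
    ∃ σ : Finset (Finset ℕ),
      insert (uP n (PF m n f.1)) σ ∈ (Klev m n (j + 1)).faces ∧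
      (∀ v, v ∉ insert (uP n (PF m n f.1)) σ → f.1 v = 0) ∧
      (∑ v ∈ insert (uP n (PF m n f.1)) σ, f.1 v = 1) ∧
      (∑ v ∈ insert (uP n (PF m n f.1)) σ, rmap m n (j + 1) f.1 v = 1) ∧
      (lev n ((insert (uP n (PF m n f.1)) σ).filter
        (fun v => rmap m n (j + 1) f.1 v ≠ 0))).card ≤ j := by
  classical
  obtain ⟨σ, hface, hsupp, hnz, hsum⟩ := canonical_supp f
  have hPlev : PF m n f.1 = lev n σ := PF_eq_lev f hface hsupp hnz
  have hgecard : j + 1 ≤ (PF m n f.1).card := PF_card_ge_of_lamF_pos hl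
  have hPcard : (PF m n f.1).card = j + 1 := le_antisymm (PF_card_le f) hgecard
  have hPne : (lev n σ).Nonempty := by
    rw [← hPlev]
    exact Finset.card_pos.mp (by omega)
  obtain ⟨hucard, hins⟩ := key_lemma (m := m) hn hface.1 hPne
  rw [← hPlev] at hucard hins
  set u := uP n (PF m n f.1) with hudef
  have hlev_ins : lev n (insert u σ) = lev n σ := by
    simp only [lev]
    rw [Finset.filter_insert, if_neg hucard]
  have hface_ins : insert u σ ∈ (Klev m n (j + 1)).faces := by
    refine ⟨hins, ?_⟩
    rw [hlev_ins, ← hPlev, hPcard]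
  have hout : ∀ v, v ∉ insert u σ → f.1 v = 0 := by
    intro v hv
    by_contra h
    exact hv (Finset.mem_insert_of_mem (hsupp v h))
  have hsumf : ∑ v ∈ insert u σ, f.1 v = 1 := by
    by_cases hu : u ∈ σ
    · rw [Finset.insert_eq_self.mpr hu]; exact hsum
    · rw [Finset.sum_insert hu]
      have hfu : f.1 u = 0 := by
        by_contra h
        exact hu (hsupp u h)
      rw [hfu, zero_add]; exact hsum
  -- decomposition of rmap
  have hdecomp : ∀ v, rmap m n (j + 1) f.1 v =
      f.1 v + (if u = v then TF m n (j + 1) f.1 else 0)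
        - (if v.card = n + 1 then min (f.1 v) (lamF m n (j + 1) f.1) else 0) := by
    intro v
    rw [rmap]
    by_cases h1 : v.card = n + 1
    · have h2 : ¬ (u = v) := fun h => hucard (h ▸ h1)
      rw [if_pos h1, if_pos h1, if_neg h2]
      ring
    · rw [if_neg h1, if_neg h1]
      by_cases h2 : u = v
      · rw [if_pos h2, if_pos h2]; ring
      · rw [if_neg h2, if_neg h2]; ring
  -- TF equals the sum of transfers over the middle layer of σ
  have hTFsum : TF m n (j + 1) f.1
      = ∑ B ∈ PF m n f.1, min (f.1 B) (lamF m n (j + 1) f.1) := by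
    rw [TF]
    refine (Finset.sum_subset (Finset.filter_subset _ _) ?_).symm
    intro B hBΦ hBn
    have hfB : f.1 B = 0 := by
      by_contra h
      exact hBn (Finset.mem_filter.mpr ⟨hBΦ, h⟩)
    rw [hfB, min_eq_left (lam_nonneg _ _ _ _)]
  have hsumr : ∑ v ∈ insert u σ, rmap m n (j + 1) f.1 v = 1 := by
    calc ∑ v ∈ insert u σ, rmap m n (j + 1) f.1 v
        = ∑ v ∈ insert u σ, (f.1 v + (if u = v then TF m n (j + 1) f.1 else 0)
            - (if v.card = n + 1 then min (f.1 v) (lamF m n (j + 1) f.1) else 0)) :=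
          Finset.sum_congr rfl (fun v _ => hdecomp v)
      _ = (∑ v ∈ insert u σ, f.1 v)
            + (∑ v ∈ insert u σ, if u = v then TF m n (j + 1) f.1 else 0)
            - ∑ v ∈ insert u σ, (if v.card = n + 1
                then min (f.1 v) (lamF m n (j + 1) f.1) else 0) := by
          rw [Finset.sum_sub_distrib, Finset.sum_add_distrib]
      _ = 1 := by
          rw [hsumf, Finset.sum_ite_eq, if_pos (Finset.mem_insert_self u σ)]
          have : ∑ v ∈ insert u σ, (if v.card = n + 1
              then min (f.1 v) (lamF m n (j + 1) f.1) else 0)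
              = ∑ B ∈ lev n (insert u σ), min (f.1 B) (lamF m n (j + 1) f.1) :=
            (Finset.sum_filter _ _).symm
          rw [this, hlev_ins, ← hPlev, ← hTFsum]
          ring
  -- the drop in the middle layer
  obtain ⟨B₀, hB₀PF, hB₀le⟩ := exists_le_lamF (f := f.1) (coord_le_one f) hPcard (by omega)
  have hB₀card : B₀.card = n + 1 :=
    (Finset.mem_filter.mp ((Finset.mem_filter.mp hB₀PF).1)).2
  have hB₀r : rmap m n (j + 1) f.1 B₀ = 0 := by
    rw [rmap, if_pos hB₀card, min_eq_left hB₀le, sub_self]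
  have hlev_le : (lev n ((insert u σ).filter
      (fun v => rmap m n (j + 1) f.1 v ≠ 0))).card ≤ j := by
    have hsub : lev n ((insert u σ).filter (fun v => rmap m n (j + 1) f.1 v ≠ 0))
        ⊆ (PF m n f.1).erase B₀ := by
      intro B hB
      obtain ⟨hBf, hBcard⟩ := Finset.mem_filter.mp hB
      obtain ⟨hBins, hBr⟩ := Finset.mem_filter.mp hBf
      have hBσ : B ∈ σ := by
        rcases Finset.mem_insert.mp hBins with rfl | h
        · exact absurd hBcard hucard
        · exact h
      refine Finset.mem_erase.mpr ⟨?_, ?_⟩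
      · rintro rfl
        exact hBr hB₀r
      · rw [hPlev]
        exact Finset.mem_filter.mpr ⟨hBσ, hBcard⟩
    calc (lev n ((insert u σ).filter (fun v => rmap m n (j + 1) f.1 v ≠ 0))).card
        ≤ ((PF m n f.1).erase B₀).card := Finset.card_le_card hsub
      _ = j := by rw [Finset.card_erase_of_mem hB₀PF, hPcard]; omega
  exact ⟨σ, hface_ins, hout, hsumf, hsumr, hlev_le⟩

/-- The retraction maps into the lower level. -/
lemma rmap_mem {m n j : ℕ} (hn : 1 ≤ n) (f : (Klev m n (j + 1)).space) :
    (∀ v, 0 ≤ rmap m n (j + 1) f.1 v) ∧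
    ∃ s ∈ (Klev m n j).faces,
      (∀ v, rmap m n (j + 1) f.1 v ≠ 0 → v ∈ s) ∧ ∑ v ∈ s, rmap m n (j + 1) f.1 v = 1 := by
  classical
  refine ⟨rmap_nonneg f, ?_⟩
  by_cases hl : lamF m n (j + 1) f.1 = 0
  · rw [rmap_eq_self f.2.1 hl]
    obtain ⟨σ, hface, hsupp, hnz, hsum⟩ := canonical_supp f
    have hPlev : PF m n f.1 = lev n σ := PF_eq_lev f hface hsupp hnz
    refine ⟨σ, ⟨hface.1, ?_⟩, hsupp, hsum⟩
    have hle : (lev n σ).card ≤ j + 1 := hface.2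
    rcases Nat.lt_or_ge (lev n σ).card (j + 1) with h | h
    · omega
    · exfalso
      have hcard : (PF m n f.1).card = j + 1 := by rw [hPlev]; omega
      exact absurd hl (ne_of_gt (lamF_pos f.2.1 hcard (by omega)))
  · have hlpos : 0 < lamF m n (j + 1) f.1 :=
      lt_of_le_of_ne (lam_nonneg _ _ _ _) (Ne.symm hl)
    obtain ⟨σ, hins, hout, hsumf, hsumr, hlev⟩ := main_facts hn f hlpos
    set u := uP n (PF m n f.1) with hudef
    have hsum' : ∑ v ∈ (insert u σ).filter (fun v => rmap m n (j + 1) f.1 v ≠ 0),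
        rmap m n (j + 1) f.1 v = 1 := by
      rw [Finset.sum_filter_ne_zero]; exact hsumr
    refine ⟨(insert u σ).filter (fun v => rmap m n (j + 1) f.1 v ≠ 0), ⟨?_, hlev⟩, ?_, hsum'⟩
    · exact (Kfull m n).down_closed _ hins.1 _ (Finset.filter_subset _ _)
        (Finset.nonempty_iff_ne_empty.mp
          (Finset.nonempty_of_sum_ne_zero (by rw [hsum']; norm_num)))
    · intro v hv
      refine Finset.mem_filter.mpr ⟨?_, hv⟩
      by_contra hvi
      have hfv : f.1 v = 0 := hout v hvi
      exact hv (rmap_zero_out (fun h => hvi (h ▸ Finset.mem_insert_self u σ)) hfv)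

/-- Points on the segment from `f` to `rmap f` stay in the level-`(j+1)` complex. -/
lemma hmt_mem {m n j : ℕ} (hn : 1 ≤ n) (f : (Klev m n (j + 1)).space) (t : ℝ)
    (ht0 : 0 ≤ t) (ht1 : t ≤ 1) :
    (∀ v, 0 ≤ (1 - t) * f.1 v + t * rmap m n (j + 1) f.1 v) ∧
    ∃ s ∈ (Klev m n (j + 1)).faces,
      (∀ v, (1 - t) * f.1 v + t * rmap m n (j + 1) f.1 v ≠ 0 → v ∈ s) ∧
      ∑ v ∈ s, ((1 - t) * f.1 v + t * rmap m n (j + 1) f.1 v) = 1 := by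
  classical
  refine ⟨fun v => add_nonneg (mul_nonneg (by linarith) (f.2.1 v))
    (mul_nonneg ht0 (rmap_nonneg f v)), ?_⟩
  by_cases hl : lamF m n (j + 1) f.1 = 0
  · have he : ∀ v, (1 - t) * f.1 v + t * rmap m n (j + 1) f.1 v = f.1 v := by
      intro v
      rw [rmap_eq_self f.2.1 hl]
      ring
    obtain ⟨hpos, s, hs, hsupp, hsum⟩ := f.2
    exact ⟨s, hs, fun v hv => hsupp v (by rw [← he v]; exact hv),
      (Finset.sum_congr rfl fun v _ => he v).trans hsum⟩
  · have hlpos : 0 < lamF m n (j + 1) f.1 :=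
      lt_of_le_of_ne (lam_nonneg _ _ _ _) (Ne.symm hl)
    obtain ⟨σ, hins, hout, hsumf, hsumr, _⟩ := main_facts hn f hlpos
    set u := uP n (PF m n f.1) with hudef
    refine ⟨insert u σ, hins, ?_, ?_⟩
    · intro v hv
      by_contra hvi
      have hfv : f.1 v = 0 := hout v hvi
      have hrv : rmap m n (j + 1) f.1 v = 0 :=
        rmap_zero_out (fun h => hvi (h ▸ Finset.mem_insert_self u σ)) hfv
      exact hv (by rw [hfv, hrv]; ring)
    · rw [Finset.sum_add_distrib, ← Finset.mul_sum, ← Finset.mul_sum, hsumf, hsumr]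
      ring

lemma continuous_fold_min (T : Finset (Finset ℕ)) :
    Continuous (fun f : Finset ℕ → ℝ => T.fold min 1 f) := by
  classical
  induction T using Finset.cons_induction with
  | empty => simpa using continuous_const
  | cons a s ha ih =>
    simp only [Finset.fold_cons]
    exact (continuous_apply a).min ih

lemma continuous_lamF (m n j : ℕ) : Continuous (fun f : Finset ℕ → ℝ => lamF m n j f) := by
  classical
  suffices h : ∀ S : Finset (Finset (Finset ℕ)),
      Continuous (fun f : Finset ℕ → ℝ => S.fold max 0 (fun T => T.fold min 1 f)) by
    exact h _
  intro S
  induction S using Finset.cons_induction with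
  | empty => simpa using continuous_const
  | cons a s ha ih =>
    simp only [Finset.fold_cons]
    exact (continuous_fold_min a).max ih

lemma continuous_TF (m n j : ℕ) : Continuous (fun f : Finset ℕ → ℝ => TF m n j f) :=
  continuous_finset_sum _ fun B _ => (continuous_apply B).min (continuous_lamF m n j)

lemma continuous_rmap (m n j : ℕ) :
    Continuous (fun f : (Klev m n (j + 1)).space => rmap m n (j + 1) f.1) := by
  classical
  apply continuous_pi
  intro v
  by_cases hv : v.card = n + 1
  · have heq : (fun f : (Klev m n (j + 1)).space => rmap m n (j + 1) f.1 v)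
        = fun f => f.1 v - min (f.1 v) (lamF m n (j + 1) f.1) := by
      funext f
      rw [rmap, if_pos hv]
    rw [heq]
    exact ((continuous_apply v).comp continuous_subtype_val).sub
      (((continuous_apply v).comp continuous_subtype_val).min
        ((continuous_lamF m n (j + 1)).comp continuous_subtype_val))
  · have heq : (fun f : (Klev m n (j + 1)).space => rmap m n (j + 1) f.1 v)
        = fun f => f.1 v + (if uP n (PF m n f.1) = v then TF m n (j + 1) f.1 else 0) := by
      funext f
      rw [rmap, if_neg hv]
      split_ifs with h
      · rfl
      · exact (add_zero _).symm
    rw [heq]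
    apply Continuous.add ((continuous_apply v).comp continuous_subtype_val)
    refine (continuous_iff_continuousAt (X := (Klev m n (j + 1)).space)).mpr ?_
    intro f₀
    have hTcont : Continuous (fun f : (Klev m n (j + 1)).space => TF m n (j + 1) f.1) :=
      (continuous_TF m n (j + 1)).comp continuous_subtype_val
    by_cases hl : lamF m n (j + 1) f₀.1 = 0
    · have hT0 : TF m n (j + 1) f₀.1 = 0 := TF_eq_zero f₀.2.1 hl
      have hval : (if uP n (PF m n f₀.1) = v then TF m n (j + 1) f₀.1 else 0) = 0 := by
        split_ifs
        exacts [hT0, rfl]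
      rw [ContinuousAt, hval]
      refine tendsto_of_tendsto_of_tendsto_of_le_of_le
        (g := fun _ : (Klev m n (j + 1)).space => (0 : ℝ))
        (h := fun f : (Klev m n (j + 1)).space => TF m n (j + 1) f.1)
        tendsto_const_nhds ?_ ?_ ?_
      · have := hTcont.continuousAt (x := f₀)
        rwa [ContinuousAt, hT0] at this
      · intro f
        dsimp only
        split_ifs
        exacts [TF_nonneg f.2.1, le_rfl]
      · intro f
        dsimp only
        split_ifs
        exacts [le_rfl, TF_nonneg f.2.1]
    · have hlpos : 0 < lamF m n (j + 1) f₀.1 :=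
        lt_of_le_of_ne (lam_nonneg _ _ _ _) (Ne.symm hl)
      have hcard : (PF m n f₀.1).card = j + 1 :=
        le_antisymm (PF_card_le f₀) (PF_card_ge_of_lamF_pos hlpos)
      set U : Set (Klev m n (j + 1)).space := {f | ∀ B ∈ PF m n f₀.1, f.1 B ≠ 0} with hUdef
      have hUopen : IsOpen U := by
        have hUeq : U = ⋂ B ∈ PF m n f₀.1, {f : (Klev m n (j + 1)).space | f.1 B ≠ 0} := by
          ext f
          simp [hUdef]
        rw [hUeq]
        refine isOpen_biInter_finset fun B _ => ?_
        exact isOpen_ne.preimage ((continuous_apply B).comp continuous_subtype_val)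
      have hf₀U : f₀ ∈ U := fun B hB => (Finset.mem_filter.mp hB).2
      have hPFeq : ∀ f ∈ U, PF m n f.1 = PF m n f₀.1 := by
        intro f hf
        have hsub : PF m n f₀.1 ⊆ PF m n f.1 := fun B hB =>
          Finset.mem_filter.mpr ⟨(Finset.mem_filter.mp hB).1, hf B hB⟩
        exact (Finset.eq_of_subset_of_card_le hsub
          (by rw [hcard]; exact PF_card_le f)).symm
      have hev : (fun f : (Klev m n (j + 1)).space =>
          if uP n (PF m n f.1) = v then TF m n (j + 1) f.1 else 0)
          =ᶠ[nhds f₀] (fun f : (Klev m n (j + 1)).space =>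
          if uP n (PF m n f₀.1) = v then TF m n (j + 1) f.1 else 0) := by
        filter_upwards [hUopen.mem_nhds hf₀U] with f hf
        rw [hPFeq f hf]
      refine ContinuousAt.congr ?_ hev.symm
      by_cases hc : uP n (PF m n f₀.1) = v
      · simp only [if_pos hc]
        exact hTcont.continuousAt
      · simp only [if_neg hc]
        exact continuousAt_const

/-- The retraction as a continuous map. -/
noncomputable def rCM (m n j : ℕ) (hn : 1 ≤ n) :
    C((Klev m n (j + 1)).space, (Klev m n j).space) :=
  ⟨fun f => ⟨rmap m n (j + 1) f.1, rmap_mem hn f⟩,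
    Continuous.subtype_mk (continuous_rmap m n j) _⟩

/-- The straight-line homotopy as a continuous map. -/
noncomputable def hCM (m n j : ℕ) (hn : 1 ≤ n) :
    C(unitInterval × (Klev m n (j + 1)).space, (Klev m n (j + 1)).space) where
  toFun p := ⟨fun v => (1 - (p.1 : ℝ)) * p.2.1 v + (p.1 : ℝ) * rmap m n (j + 1) p.2.1 v,
    hmt_mem hn p.2 p.1 p.1.2.1 p.1.2.2⟩
  continuous_toFun := by
    apply Continuous.subtype_mk
    apply continuous_pi
    intro v
    have h1 : Continuous (fun p : unitInterval × (Klev m n (j + 1)).space => (p.1 : ℝ)) :=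
      continuous_subtype_val.comp continuous_fst
    have h2 : Continuous (fun p : unitInterval × (Klev m n (j + 1)).space => p.2.1 v) :=
      (continuous_apply v).comp (continuous_subtype_val.comp continuous_snd)
    have h3 : Continuous (fun p : unitInterval × (Klev m n (j + 1)).space =>
        rmap m n (j + 1) p.2.1 v) :=
      (continuous_apply v).comp ((continuous_rmap m n j).comp continuous_snd)
    exact ((continuous_const.sub h1).mul h2).add (h1.mul h3)

/-- The homotopy equivalence between consecutive levels. -/
noncomputable def levEquiv (m n j : ℕ) (hn : 1 ≤ n) :
    ContinuousMap.HomotopyEquiv (Klev m n (j + 1)).space (Klev m n j).space where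
  toFun := rCM m n j hn
  invFun := AbsSC.incl (Klev_subset m n j)
  left_inv := by
    have H : ContinuousMap.Homotopy (ContinuousMap.id (Klev m n (j + 1)).space)
        ((AbsSC.incl (Klev_subset m n j)).comp (rCM m n j hn)) := {
      toContinuousMap := hCM m n j hn
      map_zero_left := fun f => Subtype.ext (funext fun v => by
        show (1 - ((0 : unitInterval) : ℝ)) * f.1 v
          + ((0 : unitInterval) : ℝ) * rmap m n (j + 1) f.1 v = f.1 v
        norm_num)
      map_one_left := fun f => Subtype.ext (funext fun v => by
        show (1 - ((1 : unitInterval) : ℝ)) * f.1 v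
          + ((1 : unitInterval) : ℝ) * rmap m n (j + 1) f.1 v = rmap m n (j + 1) f.1 v
        norm_num) }
    exact ⟨H.symm⟩
  right_inv := by
    have hcomp : (rCM m n j hn).comp (AbsSC.incl (Klev_subset m n j))
        = ContinuousMap.id (Klev m n j).space := by
      apply ContinuousMap.ext
      intro f
      apply Subtype.ext
      show rmap m n (j + 1) f.1 = f.1
      refine rmap_eq_self f.2.1 (lamF_eq_zero f.2.1 ?_)
      have := PF_card_le f
      omega
    rw [hcomp]

lemma absc_eq {V : Type} {K L : AbsSC V} (h : K.faces = L.faces) : K = L := by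
  cases K
  cases L
  simp only at h
  subst h
  rfl

lemma chain (m n : ℕ) (hn : 1 ≤ n) :
    ∀ j : ℕ, Nonempty (ContinuousMap.HomotopyEquiv (Klev m n j).space (Klev m n 0).space) := by
  intro j
  induction j with
  | zero => exact ⟨ContinuousMap.HomotopyEquiv.refl _⟩
  | succ j ih => exact ⟨(levEquiv m n j hn).trans ih.some⟩

end Stmt19Top

/-- For `1 ≤ n < m - 3` with `m ≥ 4`,
`VR(F_n^m ∪ F_{n+1}^m ∪ F_{n+2}^m, 2) ≃ VR(F_n^m ∪ F_{n+2}^m, 2)`. -/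
theorem stmt19 (m n : ℕ) (hn : 1 ≤ n) (h : n + 3 < m) (hm : 4 ≤ m) :
    AbsSC.HEquiv (VRc (Fnm m n ∪ Fnm m (n + 1) ∪ Fnm m (n + 2)) 2)
      (VRc (Fnm m n ∪ Fnm m (n + 2)) 2) := by
  classical
  set N := ((Finset.Icc 1 m).powerset).card with hN
  have e1 : VRc (Fnm m n ∪ Fnm m (n + 1) ∪ Fnm m (n + 2)) 2 = Klev m n N := by
    apply absc_eq
    ext σ
    constructor
    · intro hσ
      refine ⟨hσ, ?_⟩
      have hsub : lev n σ ⊆ (Finset.Icc 1 m).powerset := by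
        intro B hB
        obtain ⟨hBσ, _⟩ := Finset.mem_filter.mp hB
        exact Finset.mem_powerset.mpr (mem_bigF (hσ.2.1 B hBσ)).1
      exact Finset.card_le_card hsub
    · exact fun hσ => hσ.1
  have e0 : Klev m n 0 = VRc (Fnm m n ∪ Fnm m (n + 2)) 2 := by
    apply absc_eq
    ext σ
    constructor
    · rintro ⟨⟨hne, hF, hd⟩, hlev⟩
      have hlev0 : lev n σ = ∅ := Finset.card_eq_zero.mp (Nat.le_zero.mp hlev)
      refine ⟨hne, ?_, hd⟩
      intro A hA
      rcases hF A hA with (hh | hh) | hh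
      · exact Or.inl hh
      · exfalso
        have hmem : A ∈ lev n σ := Finset.mem_filter.mpr ⟨hA, hh.2⟩
        rw [hlev0] at hmem
        exact Finset.notMem_empty A hmem
      · exact Or.inr hh
    · rintro ⟨hne, hF, hd⟩
      refine ⟨⟨hne, ?_, hd⟩, ?_⟩
      · intro A hA
        rcases hF A hA with hh | hh
        · exact Or.inl (Or.inl hh)
        · exact Or.inr hh
      · have hempty : lev n σ = ∅ := by
          rw [Finset.eq_empty_iff_forall_notMem]
          intro B hB
          obtain ⟨hBσ, hBc⟩ := Finset.mem_filter.mp hB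
          rcases hF B hBσ with hh | hh
          · have := hh.2; omega
          · have := hh.2; omega
        rw [hempty]
        simp
  rw [e1, ← e0]
  exact chain m n hn N
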